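/- Let π be a probability vector on {0,...,k} with all π_i > 0, let 0 < C* and suppose γ_i = X/Z − i·Y/Z (with X, Y, Z as defined from π, C*, and an index I) satisfies γ_i > 0 for 0 ≤ i ≤ I and γ_i ≤ 0 for I+1 ≤ i ≤ k. Then the weights w_i = γ_i for i ≤ I and w_i = 0 for i > I satisfy the KKT conditions of the problem: maximize (∑ w_i^2 π_i)^{-1} subject to w_i ≥ 0, ∑ w_i π_i = 1, ∑ i w_i π_i = C*; hence they are a global maximizer, giving maximum wear-leveling W* = 1/(∑_{i=0}^I γ_i^2 π_i). -/

import Mathlib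

lemma sum_ite_le_aux {I k : ℕ} (h : I ≤ k) (f : ℕ → ℝ) :
    ∑ i ∈ Finset.range (k + 1), (if i ≤ I then f i else 0)
      = ∑ i ∈ Finset.range (I + 1), f i := by
  rw [← Finset.sum_subset (Finset.range_subset_range.2 (Nat.succ_le_succ h))
      (fun x _ hxs => if_neg (by simp only [Finset.mem_range] at hxs; omega))]
  exact Finset.sum_congr rfl fun i hi =>
    if_pos (by simp only [Finset.mem_range] at hi; omega)

/-- The KKT point `w_i = γ_i` (i ≤ I), `w_i = 0` (i > I), with
`γ_i = X/Z − i·Y/Z`, is a global maximizer of the wear-leveling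
`(∑ wᵢ²πᵢ)⁻¹` subject to `wᵢ ≥ 0`, `∑ wᵢπᵢ = 1`, `∑ i wᵢπᵢ = C*`; the
maximum wear-leveling is `1/(∑_{i≤I} γ_i² π_i)`. -/
theorem stmt_15 (k : ℕ) (π : ℕ → ℝ) (hpos : ∀ i ≤ k, 0 < π i)
    (hsum : ∑ i ∈ Finset.range (k + 1), π i = 1)
    (Cstar : ℝ) (hC : 0 < Cstar) (I : ℕ) (hIk : I ≤ k)
    (X Y Z : ℝ) (γ : ℕ → ℝ)
    (hX : X = ∑ i ∈ Finset.range (I + 1), (i : ℝ) ^ 2 * π i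
            - Cstar * ∑ i ∈ Finset.range (I + 1), (i : ℝ) * π i)
    (hY : Y = ∑ i ∈ Finset.range (I + 1), (i : ℝ) * π i
            - Cstar * ∑ i ∈ Finset.range (I + 1), π i)
    (hZ : Z = (∑ i ∈ Finset.range (I + 1), π i) *
                (∑ i ∈ Finset.range (I + 1), (i : ℝ) ^ 2 * π i)
            - (∑ i ∈ Finset.range (I + 1), (i : ℝ) * π i) ^ 2)
    (hγ : ∀ i, γ i = X / Z - (i : ℝ) * Y / Z)
    (hγpos : ∀ i ≤ I, 0 < γ i)
    (hγnonpos : ∀ i, I + 1 ≤ i → i ≤ k → γ i ≤ 0)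
    (hfeas1 : ∑ i ∈ Finset.range (I + 1), γ i * π i = 1)
    (hfeas2 : ∑ i ∈ Finset.range (I + 1), (i : ℝ) * γ i * π i = Cstar) :
    -- the candidate weights (γ on {0,...,I}, 0 above) are feasible and optimal
    (∑ i ∈ Finset.range (k + 1), (if i ≤ I then γ i else 0) * π i = 1) ∧
    (∑ i ∈ Finset.range (k + 1), (i : ℝ) * (if i ≤ I then γ i else 0) * π i = Cstar) ∧
    (∀ w : ℕ → ℝ, (∀ i ≤ k, 0 ≤ w i) →
      ∑ i ∈ Finset.range (k + 1), w i * π i = 1 →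
      ∑ i ∈ Finset.range (k + 1), (i : ℝ) * w i * π i = Cstar →
      (∑ i ∈ Finset.range (k + 1), (w i) ^ 2 * π i)⁻¹
        ≤ 1 / (∑ i ∈ Finset.range (I + 1), (γ i) ^ 2 * π i)) := by
  set S := ∑ i ∈ Finset.range (I + 1), (γ i) ^ 2 * π i with hSdef
  -- S in terms of X,Y,Z
  have hS : S = X / Z - Cstar * (Y / Z) := by
    have h1 : ∀ i, (γ i) ^ 2 * π i
        = (X / Z) * (γ i * π i) - (Y / Z) * ((i : ℝ) * γ i * π i) := by
      intro i
      rw [hγ i]; ring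
    rw [hSdef]
    simp_rw [h1]
    rw [Finset.sum_sub_distrib, ← Finset.mul_sum, ← Finset.mul_sum, hfeas1, hfeas2]
    ring
  have hSpos : 0 < S := by
    apply Finset.sum_pos
    · intro i hi
      simp only [Finset.mem_range] at hi
      have hγi := hγpos i (by omega)
      have hπi := hpos i (by omega)
      positivity
    · exact ⟨0, Finset.mem_range.2 (by omega)⟩
  refine ⟨?_, ?_, ?_⟩
  · have h0 : ∑ i ∈ Finset.range (k + 1), (if i ≤ I then γ i else 0) * π i
        = ∑ i ∈ Finset.range (k + 1), (if i ≤ I then γ i * π i else 0) :=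
      Finset.sum_congr rfl fun i _ => by by_cases hi : i ≤ I <;> simp [hi]
    rw [h0, sum_ite_le_aux hIk, hfeas1]
  · have h0 : ∑ i ∈ Finset.range (k + 1), ((i : ℝ) * if i ≤ I then γ i else 0) * π i
        = ∑ i ∈ Finset.range (k + 1), (if i ≤ I then (i : ℝ) * γ i * π i else 0) :=
      Finset.sum_congr rfl fun i _ => by by_cases hi : i ≤ I <;> simp [hi]
    rw [h0, sum_ite_le_aux hIk, hfeas2]
  · intro w hw hw1 hw2
    -- cross term over full range
    have hwγ : ∑ i ∈ Finset.range (k + 1), w i * γ i * π i = X / Z - Cstar * (Y / Z) := by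
      have h1 : ∀ i, w i * γ i * π i
          = (X / Z) * (w i * π i) - (Y / Z) * ((i : ℝ) * w i * π i) := by
        intro i; rw [hγ i]; ring
      simp_rw [h1]
      rw [Finset.sum_sub_distrib, ← Finset.mul_sum, ← Finset.mul_sum, hw1, hw2]
      ring
    -- split: cross term over I+1 is at least cross term over k+1
    have hsplit : ∑ i ∈ Finset.range (k + 1), w i * γ i * π i
        = (∑ i ∈ Finset.range (I + 1), w i * γ i * π i)
          + ∑ i ∈ Finset.Ico (I + 1) (k + 1), w i * γ i * π i := by
      rw [Finset.range_eq_Ico, Finset.range_eq_Ico]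
      exact (Finset.sum_Ico_consecutive (fun i => w i * γ i * π i) (by omega : 0 ≤ I + 1)
        (by omega : I + 1 ≤ k + 1)).symm
    have htail : ∑ i ∈ Finset.Ico (I + 1) (k + 1), w i * γ i * π i ≤ 0 := by
      apply Finset.sum_nonpos
      intro i hi
      simp only [Finset.mem_Ico] at hi
      have h1 : 0 ≤ w i := hw i (by omega)
      have h2 : γ i ≤ 0 := hγnonpos i hi.1 (by omega)
      have h3 : 0 < π i := hpos i (by omega)
      have : w i * γ i ≤ 0 := mul_nonpos_of_nonneg_of_nonpos h1 h2
      nlinarith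
    have hA : S ≤ ∑ i ∈ Finset.range (I + 1), w i * γ i * π i := by
      rw [hS]
      nlinarith [hsplit, htail, hwγ]
    -- expand the square
    have hsq : 0 ≤ ∑ i ∈ Finset.range (k + 1),
        (w i - (if i ≤ I then γ i else 0)) ^ 2 * π i := by
      apply Finset.sum_nonneg
      intro i hi
      simp only [Finset.mem_range] at hi
      have := hpos i (by omega)
      positivity
    have hexp : ∑ i ∈ Finset.range (k + 1),
        (w i - (if i ≤ I then γ i else 0)) ^ 2 * π i
        = (∑ i ∈ Finset.range (k + 1), (w i) ^ 2 * π i)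
          - 2 * (∑ i ∈ Finset.range (I + 1), w i * γ i * π i) + S := by
      have h1 : ∀ i, (w i - (if i ≤ I then γ i else 0)) ^ 2 * π i
          = (w i) ^ 2 * π i
            - 2 * (if i ≤ I then w i * γ i * π i else 0)
            + (if i ≤ I then (γ i) ^ 2 * π i else 0) := by
        intro i
        by_cases hi : i ≤ I <;> simp [hi] <;> ring
      simp_rw [h1]
      rw [Finset.sum_add_distrib, Finset.sum_sub_distrib, ← Finset.mul_sum,
        sum_ite_le_aux hIk (fun i => w i * γ i * π i),
        sum_ite_le_aux hIk (fun i => (γ i) ^ 2 * π i)]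
    have hTS : S ≤ ∑ i ∈ Finset.range (k + 1), (w i) ^ 2 * π i := by
      nlinarith [hsq, hexp, hA]
    rw [one_div]
    exact inv_anti₀ hSpos hTS
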